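/- Let T be an asymptotically non-vanishing commuting n-tuple (i.e., its unitary asymptote (X, U) has X ≠ 0) with spectral measure E of U. If T is not quasianalytic — i.e., there exist nonzero u, v ∈ H with ker X = {0} (after reducing by the annihilating subspace) such that the localizations E_{Xu} and E_{Xv} are not mutually absolutely continuous — then T possesses a nontrivial hyperinvariant subspace. -/

import Mathlib

open ContinuousLinearMap

/-- A commuting tuple of operators. -/
def CommutingTuple {n : ℕ} {H : Type} [NormedAddCommGroup H] [InnerProductSpace ℂ H]
    (T : Fin n → H →L[ℂ] H) : Prop :=
  ∀ i j, T i ∘L T j = T j ∘L T i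

/-- A tuple of unitary operators. -/
def UnitaryTuple {n : ℕ} {K : Type} [NormedAddCommGroup K] [InnerProductSpace ℂ K]
    [CompleteSpace K] (U : Fin n → K →L[ℂ] K) : Prop :=
  ∀ i, U i ∈ unitary (K →L[ℂ] K)

/-- `X` intertwines the tuple `T` with the tuple `U`. -/
def IntertwinesTuple {n : ℕ} {H K : Type} [NormedAddCommGroup H] [InnerProductSpace ℂ H]
    [NormedAddCommGroup K] [InnerProductSpace ℂ K]
    (T : Fin n → H →L[ℂ] H) (U : Fin n → K →L[ℂ] K) (X : H →L[ℂ] K) : Prop :=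
  ∀ i, X ∘L T i = U i ∘L X

/-- `(X, U)` is a unitary asymptote of the commuting tuple `T`: it is a unitary
intertwining pair which is universal among all unitary intertwining pairs of `T`. -/
def IsUnitaryAsymptote {n : ℕ} {H K : Type}
    [NormedAddCommGroup H] [InnerProductSpace ℂ H] [CompleteSpace H]
    [NormedAddCommGroup K] [InnerProductSpace ℂ K] [CompleteSpace K]
    (T : Fin n → H →L[ℂ] H) (U : Fin n → K →L[ℂ] K) (X : H →L[ℂ] K) : Prop :=
  UnitaryTuple U ∧ IntertwinesTuple T U X ∧
  ∀ (K' : Type) (_ : NormedAddCommGroup K') (_ : InnerProductSpace ℂ K')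
    (_ : CompleteSpace K') (U' : Fin n → K' →L[ℂ] K') (X' : H →L[ℂ] K'),
    UnitaryTuple U' → IntertwinesTuple T U' X' →
    ∃! Y : K →L[ℂ] K', IntertwinesTuple U U' Y ∧ X' = Y ∘L X

/-- Minimality of a unitary intertwining pair: the only closed subspace of `K`
containing the range of `X` and reducing every `U i` is `K` itself. -/
def MinimalPair {n : ℕ} {H K : Type}
    [NormedAddCommGroup H] [InnerProductSpace ℂ H]
    [NormedAddCommGroup K] [InnerProductSpace ℂ K] [CompleteSpace K]
    (U : Fin n → K →L[ℂ] K) (X : H →L[ℂ] K) : Prop :=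
  ∀ M : Submodule ℂ K, IsClosed (M : Set K) → (∀ h, X h ∈ M) →
    (∀ i, ∀ y ∈ M, U i y ∈ M) → (∀ i, ∀ y ∈ M, adjoint (U i) y ∈ M) → M = ⊤


/-- A (projection-valued) spectral measure on the measurable space `Ω`, with values in
orthogonal projections on the Hilbert space `K`. -/
def IsSpectralMeasure {Ω : Type} [MeasurableSpace Ω] {K : Type}
    [NormedAddCommGroup K] [InnerProductSpace ℂ K] [CompleteSpace K]
    (E : Set Ω → (K →L[ℂ] K)) : Prop :=
  (∀ ω, MeasurableSet ω → IsIdempotentElem (E ω) ∧ adjoint (E ω) = E ω) ∧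
  E Set.univ = 1 ∧
  (∀ ω ω', MeasurableSet ω → MeasurableSet ω' → E (ω ∩ ω') = E ω ∘L E ω') ∧
  (∀ f : ℕ → Set Ω, (∀ m, MeasurableSet (f m)) → Pairwise (Function.onFun Disjoint f) →
    ∀ x : K, HasSum (fun m => E (f m) x) (E (⋃ m, f m) x))

/-- If an asymptotically non-vanishing commuting tuple `T` (with injective `X`) is not
quasianalytic — witnessed by nonzero vectors `u, v` and a Borel set `ω` on which the
localizations `E_{Xu}` and `E_{Xv}` are not mutually absolutely continuous — then `T`
has a nontrivial hyperinvariant subspace. -/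
theorem not_quasianalytic_hyperinvariant {n : ℕ} {H K : Type}
    [NormedAddCommGroup H] [InnerProductSpace ℂ H] [CompleteSpace H]
    [NormedAddCommGroup K] [InnerProductSpace ℂ K] [CompleteSpace K]
    (T : Fin n → H →L[ℂ] H) (U : Fin n → K →L[ℂ] K) (X : H →L[ℂ] K)
    (hT : CommutingTuple T) (hA : IsUnitaryAsymptote T U X) (hX0 : X ≠ 0)
    (hXinj : LinearMap.ker (X : H →ₗ[ℂ] K) = ⊥)
    (E : Set (Fin n → AddCircle (1 : ℝ)) → (K →L[ℂ] K)) (hE : IsSpectralMeasure E)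
    (hUE : ∀ D : K →L[ℂ] K, (∀ i, D ∘L U i = U i ∘L D) →
      ∀ ω, MeasurableSet ω → D ∘L E ω = E ω ∘L D)
    (u v : H) (hu : u ≠ 0) (hv : v ≠ 0)
    (ω : Set (Fin n → AddCircle (1 : ℝ))) (hω : MeasurableSet ω)
    (hEv : E ω (X v) = 0) (hEu : E ω (X u) ≠ 0) :
    ∃ M : Submodule ℂ H, IsClosed (M : Set H) ∧ M ≠ ⊥ ∧ M ≠ ⊤ ∧
      ∀ C : H →L[ℂ] H, (∀ i, C ∘L T i = T i ∘L C) → ∀ h ∈ M, C h ∈ M := by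
  refine ⟨LinearMap.ker (((E ω) ∘L X : H →L[ℂ] K) : H →ₗ[ℂ] K), ?_, ?_, ?_, ?_⟩
  · exact ContinuousLinearMap.isClosed_ker _
  · intro h
    apply hv
    have : v ∈ (⊥ : Submodule ℂ H) := by
      rw [← h]
      simpa [LinearMap.mem_ker] using hEv
    simpa using this
  · intro h
    apply hEu
    have : u ∈ LinearMap.ker (((E ω) ∘L X : H →L[ℂ] K) : H →ₗ[ℂ] K) := by rw [h]; trivial
    simpa [LinearMap.mem_ker] using this
  · intro C hC h hh
    obtain ⟨hU, hInt, huniv⟩ := hA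
    have hint' : IntertwinesTuple T U (X ∘L C) := by
      intro i
      calc (X ∘L C) ∘L T i = X ∘L (C ∘L T i) := by rw [ContinuousLinearMap.comp_assoc]
        _ = X ∘L (T i ∘L C) := by rw [hC i]
        _ = (X ∘L T i) ∘L C := by rw [ContinuousLinearMap.comp_assoc]
        _ = (U i ∘L X) ∘L C := by rw [hInt i]
        _ = U i ∘L (X ∘L C) := by rw [ContinuousLinearMap.comp_assoc]
    obtain ⟨Y, ⟨hYint, hYX⟩, -⟩ := huniv K _ _ _ U (X ∘L C) hU hint'
    have hcomm := hUE Y hYint ω hω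
    have hh0 : E ω (X h) = 0 := by simpa [LinearMap.mem_ker] using hh
    have : E ω (X (C h)) = 0 := by
      have h1 : X (C h) = Y (X h) := by
        have := congrArg (fun f => f h) hYX
        simpa using this
      have h2 : E ω (Y (X h)) = Y (E ω (X h)) := by
        have := congrArg (fun f => f (X h)) hcomm.symm
        simpa using this
      rw [h1, h2, hh0, map_zero]
    simpa [LinearMap.mem_ker] using this
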